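/- Let A be a bounded distributive lattice and κ an infinite regular cardinal. Then BL_κ A = pH A if and only if every relative annihilator of A belongs to BL_κ A and pH A, with its inherited order, is a κ-frame. -/

import Mathlib

open Cardinal

section Defs

variable {A : Type*} [SemilatticeInf A]

/-- `S ⊆ A` is admissible, with distributive join `x`: the join of `S` is `x` and
for every `a`, `a ⊓ x` is the join of `{a ⊓ s : s ∈ S}`. -/
def IsDistJoin (S : Set A) (x : A) : Prop :=
  IsLUB S x ∧ ∀ a : A, IsLUB ((fun s => a ⊓ s) '' S) (a ⊓ x)

/-- A D-ideal of the meet-semilattice `A`: a downset closed under joins of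
admissible subsets. -/
def IsDIdeal (E : Set A) : Prop :=
  IsLowerSet E ∧ ∀ S : Set A, S ⊆ E → ∀ x : A, IsDistJoin S x → x ∈ E

/-- `J` is the join of the family `T` in the Bruns–Lakser completion `BL A`:
the least D-ideal containing `⋃₀ T`. -/
def IsBLJoin (T : Set (Set A)) (J : Set A) : Prop :=
  IsDIdeal J ∧ ⋃₀ T ⊆ J ∧ ∀ E : Set A, IsDIdeal E → ⋃₀ T ⊆ E → J ⊆ E

/-- A family of D-ideals closed under finite meets (intersections, including the
top `Set.univ` of `BL A`) and under κ-joins computed in `BL A`. -/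
def BLClosed (κ : Cardinal) (C : Set (Set A)) : Prop :=
  Set.univ ∈ C ∧ (∀ E ∈ C, ∀ F ∈ C, E ∩ F ∈ C) ∧
    ∀ T : Set (Set A), T ⊆ C → #T < κ → ∀ J : Set A, IsBLJoin T J → J ∈ C

/-- The sub-κ-frame of `BL A` generated by `G`: the smallest subset of `BL A`
containing `G` and closed under finite meets and κ-joins computed in `BL A`. -/
def BLKappa (κ : Cardinal) (G : Set (Set A)) : Set (Set A) :=
  ⋂₀ {C : Set (Set A) | G ⊆ C ∧ C ⊆ {E : Set A | IsDIdeal E} ∧ BLClosed κ C}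

/-- A normal ideal: a downset `N` with `N = Nᵘˡ`. -/
def IsNormalIdeal (N : Set A) : Prop :=
  IsLowerSet N ∧ N = lowerBounds (upperBounds N)

/-- The relative annihilator `⟨a,b⟩ = {x : a ⊓ x ≤ b}`. -/
def RelAnn (a b : A) : Set A := {x : A | a ⊓ x ≤ b}

end Defs

/-- κ-completeness: every κ-join exists. -/
def IsKappaComplete (A : Type*) [Preorder A] (κ : Cardinal) : Prop :=
  ∀ S : Set A, #S < κ → ∃ x : A, IsLUB S x

/-- κJD: every existing κ-join is a distributive join. -/
def IsKappaJD (A : Type*) [SemilatticeInf A] (κ : Cardinal) : Prop :=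
  ∀ S : Set A, #S < κ → ∀ x : A, IsLUB S x → IsDistJoin S x

/-- A κ-frame: a κ-complete and κJD meet-semilattice. -/
def IsKappaFrame (A : Type*) [SemilatticeInf A] (κ : Cardinal) : Prop :=
  IsKappaComplete A κ ∧ IsKappaJD A κ

/-- A family of subsets of `α` closed under binary intersections is a
meet-semilattice in the inherited (inclusion) order, meets being intersections. -/
def subSemilatticeInf {α : Type*} (B : Set (Set α))
    (hmeet : ∀ E ∈ B, ∀ F ∈ B, E ∩ F ∈ B) : SemilatticeInf ↥B :=
  { (inferInstance : PartialOrder ↥B) with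
    inf := fun E F => ⟨E.1 ∩ F.1, hmeet _ E.2 _ F.2⟩
    inf_le_left := fun _ _ _ hx => hx.1
    inf_le_right := fun _ _ _ hx => hx.2
    le_inf := fun _ _ _ h1 h2 _ hx => ⟨h1 hx, h2 hx⟩ }

/-- The closure conditions defining the proHeyting extension inside `BL A`:
containing every relative annihilator, the top and bottom of `BL A`, and closed
under binary meets (intersections) and binary joins of `BL A`. -/
def PHClosed {A : Type*} [SemilatticeInf A] (C : Set (Set A)) : Prop :=
  (∀ a b : A, RelAnn a b ∈ C) ∧
  Set.univ ∈ C ∧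
  (∀ J : Set A, IsBLJoin (∅ : Set (Set A)) J → J ∈ C) ∧
  (∀ E ∈ C, ∀ F ∈ C, E ∩ F ∈ C) ∧
  (∀ E ∈ C, ∀ F ∈ C, ∀ J : Set A, IsBLJoin {E, F} J → J ∈ C)

/-- The proHeyting extension `pH A`: the bounded sublattice of `BL A` generated by
the relative annihilators of `A`. -/
def pHExt (A : Type*) [SemilatticeInf A] : Set (Set A) :=
  ⋂₀ {C : Set (Set A) | C ⊆ {E : Set A | IsDIdeal E} ∧ PHClosed C}

theorem pHExt_inter_mem {A : Type*} [SemilatticeInf A] :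
    ∀ E ∈ pHExt A, ∀ F ∈ pHExt A, E ∩ F ∈ pHExt A := by
  intro E hE F hF
  rw [pHExt, Set.mem_sInter] at hE hF ⊢
  intro C hC
  exact hC.2.2.2.2.1 E (hE C hC) F (hF C hC)

/-- `pH A` with its inherited order is a meet-semilattice. -/
instance pHExtSemilatticeInf (A : Type*) [SemilatticeInf A] :
    SemilatticeInf ↥(pHExt A) :=
  subSemilatticeInf (pHExt A) pHExt_inter_mem

section Aux

variable {A : Type*} [SemilatticeInf A]

lemma meet_distJoin {S : Set A} {x : A} (u : A) (h : IsDistJoin S x) :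
    IsDistJoin ((fun s => u ⊓ s) '' S) (u ⊓ x) := by
  refine ⟨h.2 u, fun p => ?_⟩
  have h2 := h.2 (p ⊓ u)
  rw [Set.image_image]
  have : (fun s => p ⊓ (u ⊓ s)) = (fun s => (p ⊓ u) ⊓ s) := by
    funext s; rw [inf_assoc]
  rw [this, ← inf_assoc]
  exact h2

lemma isDIdeal_univ : IsDIdeal (Set.univ : Set A) :=
  ⟨fun _ _ _ _ => trivial, fun _ _ _ _ => trivial⟩

lemma isDIdeal_inter {E F : Set A} (hE : IsDIdeal E) (hF : IsDIdeal F) :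
    IsDIdeal (E ∩ F) :=
  ⟨fun _ _ h hb => ⟨hE.1 h hb.1, hF.1 h hb.2⟩,
   fun S hS x hx => ⟨hE.2 S (fun s hs => (hS hs).1) x hx, hF.2 S (fun s hs => (hS hs).2) x hx⟩⟩

lemma isDIdeal_Iic (a : A) : IsDIdeal (Set.Iic a) := by
  refine ⟨fun _ _ h hb => le_trans h hb, fun S hS x hx => ?_⟩
  exact hx.1.2 (fun s hs => hS hs)

lemma isDIdeal_relAnn (a b : A) : IsDIdeal (RelAnn a b) := by
  constructor
  · intro y z hzy hy
    exact le_trans (inf_le_inf_left a hzy) hy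
  · intro S hS x hx
    have := (hx.2 a).2 (fun y hy => by
      obtain ⟨s, hs, rfl⟩ := hy
      exact hS hs)
    exact this

/-- The least D-ideal containing `U`. -/
def blJoin (U : Set A) : Set A := ⋂₀ {W : Set A | IsDIdeal W ∧ U ⊆ W}

lemma isDIdeal_blJoin (U : Set A) : IsDIdeal (blJoin U) := by
  constructor
  · intro y z hzy hy W hW
    exact hW.1.1 hzy (hy W hW)
  · intro S hS x hx W hW
    exact hW.1.2 S (fun s hs => hS hs W hW) x hx

lemma subset_blJoin (U : Set A) : U ⊆ blJoin U :=
  fun z hz W hW => hW.2 hz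

lemma blJoin_subset {U W : Set A} (hW : IsDIdeal W) (hUW : U ⊆ W) : blJoin U ⊆ W :=
  Set.sInter_subset_of_mem ⟨hW, hUW⟩

lemma isBLJoin_blJoin (T : Set (Set A)) : IsBLJoin T (blJoin (⋃₀ T)) :=
  ⟨isDIdeal_blJoin _, subset_blJoin _, fun _ hE hTE => blJoin_subset hE hTE⟩

lemma isBLJoin_eq {T : Set (Set A)} {J J' : Set A} (h : IsBLJoin T J) (h' : IsBLJoin T J') :
    J = J' :=
  Set.Subset.antisymm (h.2.2 J' h'.1 h'.2.1) (h'.2.2 J h.1 h.2.1)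

/-- Frame distributivity in `BL A`. -/
lemma blJoin_distrib {a U : Set A} (ha : IsLowerSet a) (hU : IsLowerSet U) :
    a ∩ blJoin U ⊆ blJoin (a ∩ U) := by
  set Ja := blJoin (a ∩ U) with hJa
  have hJaD := isDIdeal_blJoin (a ∩ U)
  set F : Set A := {z | ∀ u ∈ a, u ⊓ z ∈ Ja} with hF
  have hFD : IsDIdeal F := by
    constructor
    · intro y z hzy hy u hu
      exact hJaD.1 (inf_le_inf_left u hzy) (hy u hu)
    · intro S hS x hx u hu
      refine hJaD.2 ((fun s => u ⊓ s) '' S) ?_ (u ⊓ x) (meet_distJoin u hx)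
      rintro y ⟨s, hs, rfl⟩
      exact hS hs u hu
  have hUF : U ⊆ F := by
    intro z hz u hu
    refine subset_blJoin _ ⟨ha inf_le_left hu, hU inf_le_right hz⟩
  intro z hz
  have : z ∈ F := blJoin_subset hFD hUF hz.2
  have := this z hz.1
  rwa [inf_idem] at this

end Aux

section Aux2

variable {A : Type*} [SemilatticeInf A]

lemma blClosed_dIdeals (κ : Cardinal) : BLClosed κ {E : Set A | IsDIdeal E} :=
  ⟨isDIdeal_univ, fun _ hE _ hF => isDIdeal_inter hE hF, fun _ _ _ J hJ => hJ.1⟩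

lemma phClosed_dIdeals : PHClosed {E : Set A | IsDIdeal E} :=
  ⟨isDIdeal_relAnn, isDIdeal_univ, fun _ hJ => hJ.1,
   fun _ hE _ hF => isDIdeal_inter hE hF, fun _ _ _ _ _ hJ => hJ.1⟩

lemma blKappa_subset_dIdeals (κ : Cardinal) :
    BLKappa κ (Set.range (Set.Iic : A → Set A)) ⊆ {E : Set A | IsDIdeal E} :=
  Set.sInter_subset_of_mem
    ⟨by rintro E ⟨a, rfl⟩; exact isDIdeal_Iic a, Set.Subset.rfl, blClosed_dIdeals κ⟩

lemma pHExt_subset_dIdeals : pHExt A ⊆ {E : Set A | IsDIdeal E} :=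
  Set.sInter_subset_of_mem ⟨Set.Subset.rfl, phClosed_dIdeals⟩

lemma blClosed_blKappa (κ : Cardinal) (G : Set (Set A)) : BLClosed κ (BLKappa κ G) := by
  refine ⟨fun C hC => hC.2.2.1, fun E hE F hF C hC => hC.2.2.2.1 E (hE C hC) F (hF C hC),
    fun T hT hcard J hJ C hC => hC.2.2.2.2 T (fun E hE => hT hE C hC) hcard J hJ⟩

lemma subset_blKappa (κ : Cardinal) (G : Set (Set A)) : G ⊆ BLKappa κ G :=
  fun E hE C hC => hC.1 hE

lemma relAnn_mem_pHExt (a b : A) : RelAnn a b ∈ pHExt A :=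
  fun C hC => hC.2.1 a b

lemma univ_mem_pHExt : (Set.univ : Set A) ∈ pHExt A :=
  fun C hC => hC.2.2.1

lemma phJoin_mem_pHExt {E F : Set A} (hE : E ∈ pHExt A) (hF : F ∈ pHExt A)
    {J : Set A} (hJ : IsBLJoin {E, F} J) : J ∈ pHExt A :=
  fun C hC => hC.2.2.2.2.2 E (hE C hC) F (hF C hC) J hJ

lemma phBot_mem_pHExt {J : Set A} (hJ : IsBLJoin (∅ : Set (Set A)) J) : J ∈ pHExt A :=
  fun C hC => hC.2.2.2.1 J hJ

lemma pHExt_inter_mem' :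
    ∀ E ∈ pHExt A, ∀ F ∈ pHExt A, E ∩ F ∈ pHExt A :=
  fun E hE F hF C hC => hC.2.2.2.2.1 E (hE C hC) F (hF C hC)

end Aux2

section Lat
variable {A : Type*} [Lattice A] [BoundedOrder A]

lemma Iic_eq_relAnn (a : A) : Set.Iic a = RelAnn ⊤ a := by
  ext x; simp [RelAnn, Set.mem_Iic]

lemma Iic_mem_pHExt (a : A) : Set.Iic a ∈ pHExt A := by
  rw [Iic_eq_relAnn]; exact relAnn_mem_pHExt _ _

end Lat

section MainAux

variable {A : Type*} [DistribLattice A] [BoundedOrder A]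

lemma isLowerSet_sUnion_of {T : Set (Set A)} (h : ∀ E ∈ T, IsLowerSet E) :
    IsLowerSet (⋃₀ T) := by
  rintro y z hzy ⟨E, hE, hy⟩
  exact ⟨E, hE, h E hE hzy hy⟩

end MainAux

theorem BLKappa_eq_pHExt_iff (A : Type*) [DistribLattice A] [BoundedOrder A]
    (κ : Cardinal) (hκ : κ.IsRegular) :
    BLKappa κ (Set.range (Set.Iic : A → Set A)) = pHExt A ↔
      ((∀ a b : A, RelAnn a b ∈ BLKappa κ (Set.range (Set.Iic : A → Set A))) ∧
        IsKappaFrame ↥(pHExt A) κ) := by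
  set G : Set (Set A) := Set.range (Set.Iic : A → Set A) with hG
  constructor
  · intro h
    have hmem : ∀ E : Set A, E ∈ pHExt A → E ∈ BLKappa κ G := fun E hE => by
      rw [h]; exact hE
    refine ⟨fun a b => by rw [h]; exact relAnn_mem_pHExt a b, ?_, ?_⟩
    · -- κ-complete
      intro S hS
      set T : Set (Set A) := Subtype.val '' S with hT
      have hTcard : #T < κ := lt_of_le_of_lt Cardinal.mk_image_le hS
      set J : Set A := blJoin (⋃₀ T) with hJdef
      have hJ : IsBLJoin T J := isBLJoin_blJoin T
      have hTB : T ⊆ BLKappa κ G := by rintro E ⟨s, hs, rfl⟩; exact hmem _ s.2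
      have hJpH : J ∈ pHExt A := by
        rw [← h]; exact (blClosed_blKappa κ G).2.2 T hTB hTcard J hJ
      refine ⟨⟨J, hJpH⟩, fun s hs => ?_, fun F hF => ?_⟩
      · show s.val ⊆ J
        exact fun z hz => hJ.2.1 ⟨s.val, ⟨s, hs, rfl⟩, hz⟩
      · show J ⊆ F.val
        refine hJ.2.2 F.val (pHExt_subset_dIdeals F.2) ?_
        rintro z ⟨E, ⟨s, hs, rfl⟩, hz⟩
        exact (hF hs : s.val ⊆ F.val) hz
    · -- κJD
      intro S hS x hx
      set T : Set (Set A) := Subtype.val '' S with hT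
      have hTcard : #T < κ := lt_of_le_of_lt Cardinal.mk_image_le hS
      set J : Set A := blJoin (⋃₀ T) with hJdef
      have hJ : IsBLJoin T J := isBLJoin_blJoin T
      have hTB : T ⊆ BLKappa κ G := by rintro E ⟨s, hs, rfl⟩; exact hmem _ s.2
      have hJpH : J ∈ pHExt A := by
        rw [← h]; exact (blClosed_blKappa κ G).2.2 T hTB hTcard J hJ
      have hJLUB : IsLUB S (⟨J, hJpH⟩ : ↥(pHExt A)) := by
        refine ⟨fun s hs => ?_, fun F hF => ?_⟩
        · show s.val ⊆ J
          exact fun z hz => hJ.2.1 ⟨s.val, ⟨s, hs, rfl⟩, hz⟩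
        · show J ⊆ F.val
          refine hJ.2.2 F.val (pHExt_subset_dIdeals F.2) ?_
          rintro z ⟨E, ⟨s, hs, rfl⟩, hz⟩
          exact (hF hs : s.val ⊆ F.val) hz
      have hxJ : x = ⟨J, hJpH⟩ := hx.unique hJLUB
      refine ⟨hx, fun a => ⟨?_, ?_⟩⟩
      · rintro y ⟨s, hs, rfl⟩
        exact inf_le_inf_left a (hx.1 hs)
      · intro F hF
        have hsub : a.val ∩ ⋃₀ T ⊆ F.val := by
          rintro z ⟨hza, E, ⟨s, hs, rfl⟩, hz⟩
          exact (hF ⟨s, hs, rfl⟩ : (a ⊓ s).val ⊆ F.val) ⟨hza, hz⟩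
        have key : a.val ∩ J ⊆ blJoin (a.val ∩ ⋃₀ T) :=
          blJoin_distrib (pHExt_subset_dIdeals a.2).1
            (isLowerSet_sUnion_of (by
              rintro E ⟨s, hs, rfl⟩
              exact (pHExt_subset_dIdeals s.2).1))
        have h2 : blJoin (a.val ∩ ⋃₀ T) ⊆ F.val :=
          blJoin_subset (pHExt_subset_dIdeals F.2) hsub
        show (a ⊓ x).val ⊆ F.val
        rw [hxJ]
        exact fun z hz => h2 (key hz)
  · rintro ⟨hAnn, hComp, hJD⟩
    apply Set.Subset.antisymm
    · -- BLK ⊆ pH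
      apply Set.sInter_subset_of_mem
      refine ⟨?_, pHExt_subset_dIdeals, univ_mem_pHExt, pHExt_inter_mem', ?_⟩
      · rintro E ⟨a, rfl⟩; exact Iic_mem_pHExt a
      · -- κ-join closure of pH
        intro T hT hcard J hJ
        set S : Set ↥(pHExt A) := Subtype.val ⁻¹' T with hSdef
        have hScard : #S < κ :=
          lt_of_le_of_lt (Cardinal.mk_preimage_of_injective _ _ Subtype.val_injective) hcard
        obtain ⟨x, hx⟩ := hComp S hScard
        have hub : ∀ E ∈ T, E ⊆ x.val := fun E hE =>
          (hx.1 (show (⟨E, hT hE⟩ : ↥(pHExt A)) ∈ S from hE) : E ⊆ x.val)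
        have hJx : J ⊆ x.val := by
          refine hJ.2.2 x.val (pHExt_subset_dIdeals x.2) ?_
          rintro z ⟨E, hE, hz⟩
          exact hub E hE hz
        have hdist := hJD S hScard x hx
        have hxJ : x.val ⊆ J := by
          intro c hc
          have key : ∀ p m : A, (∀ s ∈ Set.Iic c ∩ ⋃₀ T, p ⊓ s ≤ m) → p ⊓ c ≤ m := by
            intro p m hm
            set a : ↥(pHExt A) := ⟨Set.Iic c, Iic_mem_pHExt c⟩ with ha
            have h2 := hdist.2 a
            set w : ↥(pHExt A) := a ⊓ ⟨RelAnn p m, relAnn_mem_pHExt p m⟩ with hw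
            have hwub : w ∈ upperBounds ((fun s => a ⊓ s) '' S) := by
              rintro y ⟨s, hs, rfl⟩
              show (a ⊓ s).val ⊆ w.val
              rintro z ⟨hz1, hz2⟩
              exact ⟨hz1, hm z ⟨hz1, s.val, hs, hz2⟩⟩
            have hle : a ⊓ x ≤ w := h2.2 hwub
            have hc2 : c ∈ (a ⊓ x).val := ⟨le_refl c, hc⟩
            exact ((hle : (a ⊓ x).val ⊆ w.val) hc2).2
          have hdj : IsDistJoin (Set.Iic c ∩ ⋃₀ T) c := by
            constructor
            · refine ⟨fun s hs => hs.1, fun m hm => ?_⟩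
              have := key ⊤ m (fun s hs => le_trans inf_le_right (hm hs))
              rwa [top_inf_eq] at this
            · intro p
              refine ⟨?_, fun m hm => key p m (fun s hs => hm ⟨s, hs, rfl⟩)⟩
              rintro y ⟨s, hs, rfl⟩
              exact inf_le_inf_left p hs.1
          exact hJ.1.2 _ (fun s hs => hJ.2.1 hs.2) c hdj
        have : J = x.val := Set.Subset.antisymm hJx hxJ
        rw [this]; exact x.2
    · -- pH ⊆ BLK
      apply Set.sInter_subset_of_mem
      refine ⟨blKappa_subset_dIdeals κ, hAnn, (blClosed_blKappa κ G).1, ?_,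
        (blClosed_blKappa κ G).2.1, ?_⟩
      · intro J hJ
        refine (blClosed_blKappa κ G).2.2 ∅ (Set.empty_subset _) ?_ J hJ
        have h0 : #(∅ : Set (Set A)) = 0 := by simp
        rw [h0]; exact hκ.pos
      · intro E hE F hF J hJ
        refine (blClosed_blKappa κ G).2.2 {E, F} ?_ ?_ J hJ
        · rintro X hX
          rcases hX with rfl | rfl
          · exact hE
          · exact hF
        · exact lt_of_lt_of_le (Set.toFinite _).lt_aleph0 hκ.aleph0_le
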